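/- Let α ∈ (1.26, 1.71), λ ≥ 0, h > 0, and let γ₄ be real with a₃(α) ≤ γ₄ ≤ a₄(α). Then the third-order tempered-WSGD weights satisfy g_{1,λ} ≤ 0, g_{0,λ} + g_{2,λ} ≥ 0, and g_{k,λ} ≥ 0 for every integer k ≥ 3. -/

import Mathlib

noncomputable def a₃ (α : ℝ) : ℝ :=
  max ((α ^ 5 / 8 + 7 * α ^ 4 / 12 - 5 * α ^ 3 / 8 - 49 * α ^ 2 / 12 + 3 * α) /
        (α ^ 3 + 6 * α ^ 2 + 11 * α + 6))
      ((α ^ 5 / 8 + α ^ 4 / 3 - 67 * α ^ 3 / 24 - 23 * α ^ 2 / 6 + 175 * α / 6 - 30) /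
        (α ^ 3 + 6 * α ^ 2 + 11 * α + 6))

noncomputable def a₄ (α : ℝ) : ℝ :=
  min ((α ^ 4 / 8 + 7 * α ^ 3 / 12 + α ^ 2 / 8 - 13 * α / 6) / (α ^ 2 + 5 * α + 8))
      ((α ^ 5 / 8 + 11 * α ^ 4 / 24 - 41 * α ^ 3 / 24 - 107 * α ^ 2 / 24 + 163 * α / 12 - 8) /
        (α ^ 3 + 6 * α ^ 2 + 11 * α + 6))

set_option maxHeartbeats 6000000 in
/-- sign properties of the third-order tempered-WSGD weights for
`α ∈ (1.26, 1.71)` and `a₃(α) ≤ γ₄ ≤ a₄(α)`. -/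
theorem third_order_tempered_WSGD_weights_signs
    (α lam h γ₁ γ₂ γ₃ γ₄ : ℝ) (hα1 : 1.26 < α) (hα2 : α < 1.71)
    (hlam : 0 ≤ lam) (hh : 0 < h)
    (hγ₄l : a₃ α ≤ γ₄) (hγ₄r : γ₄ ≤ a₄ α)
    (hγ₁ : γ₁ = α ^ 2 / 8 + 5 * α / 24 - γ₄)
    (hγ₂ : γ₂ = -α ^ 2 / 4 + α / 12 + 1 + 3 * γ₄)
    (hγ₃ : γ₃ = α ^ 2 / 8 - 7 * α / 24 - 3 * γ₄)
    (ω : ℕ → ℝ)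
    (hω : ∀ k : ℕ, ω k =
      (-1 : ℝ) ^ k * (∏ i ∈ Finset.range k, (α - (i : ℝ))) / (Nat.factorial k : ℝ))
    (g : ℕ → ℝ)
    (hg0 : g 0 = γ₁ * ω 0 * Real.exp (h * lam))
    (hg1 : g 1 = γ₁ * ω 1 + γ₂ * ω 0)
    (hg2 : g 2 = (γ₁ * ω 2 + γ₂ * ω 1 + γ₃ * ω 0) * Real.exp (-(h * lam)))
    (hgk : ∀ k : ℕ, 3 ≤ k → g k =
      (γ₁ * ω k + γ₂ * ω (k - 1) + γ₃ * ω (k - 2) + γ₄ * ω (k - 3)) *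
        Real.exp (-((k : ℝ) - 1) * h * lam)) :
    g 1 ≤ 0 ∧ 0 ≤ g 0 + g 2 ∧ ∀ k : ℕ, 3 ≤ k → 0 ≤ g k := by

  have hα0 : (0:ℝ) < α := by linarith
  have hD2 : (0:ℝ) < α ^ 2 + 5 * α + 8 := by nlinarith
  have hD3 : (0:ℝ) < α ^ 3 + 6 * α ^ 2 + 11 * α + 6 := by nlinarith
  -- the four scalar bounds on γ₄
  have hB1 : α ^ 5 / 8 + 7 * α ^ 4 / 12 - 5 * α ^ 3 / 8 - 49 * α ^ 2 / 12 + 3 * α ≤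
      γ₄ * (α ^ 3 + 6 * α ^ 2 + 11 * α + 6) := by
    have h1 := le_trans (le_max_left _ _) hγ₄l
    rw [a₃] at hγ₄l
    have h2 := le_trans (le_max_left _ _) hγ₄l
    rw [div_le_iff₀ hD3] at h2
    linarith
  have hB2 : α ^ 5 / 8 + α ^ 4 / 3 - 67 * α ^ 3 / 24 - 23 * α ^ 2 / 6 + 175 * α / 6 - 30 ≤
      γ₄ * (α ^ 3 + 6 * α ^ 2 + 11 * α + 6) := by
    rw [a₃] at hγ₄l
    have h2 := le_trans (le_max_right _ _) hγ₄l
    rw [div_le_iff₀ hD3] at h2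
    linarith
  have hC1 : γ₄ * (α ^ 2 + 5 * α + 8) ≤
      α ^ 4 / 8 + 7 * α ^ 3 / 12 + α ^ 2 / 8 - 13 * α / 6 := by
    rw [a₄] at hγ₄r
    have h2 := le_trans hγ₄r (min_le_left _ _)
    rw [le_div_iff₀ hD2] at h2
    linarith
  have hC2 : γ₄ * (α ^ 3 + 6 * α ^ 2 + 11 * α + 6) ≤
      α ^ 5 / 8 + 11 * α ^ 4 / 24 - 41 * α ^ 3 / 24 - 107 * α ^ 2 / 24 + 163 * α / 12 - 8 := by
    rw [a₄] at hγ₄r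
    have h2 := le_trans hγ₄r (min_le_right _ _)
    rw [le_div_iff₀ hD3] at h2
    linarith
  -- basic facts about ω
  have hrec : ∀ m : ℕ, ω (m + 1) = ω m * (((m : ℝ) - α) / ((m : ℝ) + 1)) := by
    intro m
    have h2 := hω (m + 1)
    rw [Finset.prod_range_succ, Nat.factorial_succ] at h2
    rw [h2, hω m]
    have hf : (Nat.factorial m : ℝ) ≠ 0 := by
      exact_mod_cast (Nat.factorial_ne_zero m)
    have hm1 : ((m : ℝ) + 1) ≠ 0 := by positivity
    push_cast
    field_simp
    ring
  have hω0 : ω 0 = 1 := by rw [hω]; simp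
  have hω1 : ω 1 = -α := by
    have h2 := hrec 0
    rw [hω0] at h2
    rw [h2]; norm_num
  have hω2 : ω 2 = α * (α - 1) / 2 := by
    have h2 := hrec 1
    rw [hω1] at h2
    rw [h2]; push_cast; ring
  have hω3 : ω 3 = α * (α - 1) * (2 - α) / 6 := by
    have h2 := hrec 2
    rw [hω2] at h2
    rw [h2]; push_cast; ring
  have hω4 : ω 4 = α * (α - 1) * (2 - α) * (3 - α) / 24 := by
    have h2 := hrec 3
    rw [hω3] at h2
    rw [h2]; push_cast; ring
  have hωnn : ∀ n : ℕ, 0 ≤ ω (n + 2) := by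
    intro n
    induction n with
    | zero => rw [hω2]; nlinarith
    | succ p ih =>
      have h2 := hrec (p + 2)
      rw [h2]
      apply mul_nonneg ih
      apply div_nonneg
      · push_cast
        have : (0:ℝ) ≤ (p : ℝ) := Nat.cast_nonneg p
        linarith
      · positivity
  -- Part 1 : g 1 ≤ 0
  have part1 : g 1 ≤ 0 := by
    rw [hg1, hω1, hω0, hγ₁, hγ₂]
    have hmul := mul_le_mul_of_nonneg_left hC1 (show (0:ℝ) ≤ α + 3 by linarith)
    have ha2 : (1.5876:ℝ) ≤ α ^ 2 := by nlinarith
    have ha3 : (2.000376:ℝ) ≤ α ^ 3 := by nlinarith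
    have ha4 : (0:ℝ) ≤ α ^ 4 := by positivity
    have hP1 : (0:ℝ) ≤ α ^ 4 / 8 + 4 * α ^ 3 / 3 + 97 * α ^ 2 / 24 + 5 * α / 6 - 8 := by
      linarith
    refine le_of_mul_le_mul_right ?_ hD2
    rw [zero_mul]
    nlinarith [hmul, hP1]
  -- Part 2 : 0 ≤ g 0 + g 2
  have part2 : 0 ≤ g 0 + g 2 := by
    rw [hg0, hg2, hω0, hω1, hω2]
    have hγ₁nn : 0 ≤ γ₁ := by
      rw [hγ₁]
      nlinarith [hC1, hD2]
    have hSnn : 0 ≤ γ₁ + (γ₁ * (α * (α - 1) / 2) + γ₂ * (-α) + γ₃ * 1) := by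
      rw [hγ₁, hγ₂, hγ₃]
      nlinarith [hC1]
    have hx : 0 ≤ h * lam := mul_nonneg hh.le hlam
    have he : Real.exp (-(h * lam)) ≤ Real.exp (h * lam) :=
      Real.exp_le_exp.2 (by linarith)
    have hep : (0:ℝ) < Real.exp (-(h * lam)) := Real.exp_pos _
    nlinarith [mul_nonneg hγ₁nn (sub_nonneg.2 he), mul_nonneg hSnn hep.le]
  refine ⟨part1, part2, ?_⟩
  -- Part 3 : 0 ≤ g k for k ≥ 3
  intro k hk
  obtain ⟨m, rfl⟩ : ∃ m, k = m + 3 := ⟨k - 3, by omega⟩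
  rw [hgk (m + 3) (by omega)]
  apply mul_nonneg _ (Real.exp_pos _).le
  have e1 : m + 3 - 1 = m + 2 := rfl
  have e2 : m + 3 - 2 = m + 1 := rfl
  have e3 : m + 3 - 3 = m := rfl
  rw [e1, e2, e3]
  match m with
  | 0 =>
    rw [hω3, hω2, hω1, hω0, hγ₁, hγ₂, hγ₃]
    linarith [hB1]
  | 1 =>
    rw [hω4, hω3, hω2, hω1, hγ₁, hγ₂, hγ₃]
    linarith [mul_nonneg hα0.le (sub_nonneg.2 hC2)]
  | (n + 2) =>
    set x : ℝ := (n : ℝ) with hxdef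
    have hx : (0:ℝ) ≤ x := Nat.cast_nonneg n
    have hr1 := hrec (n + 2)
    have hr2 := hrec (n + 3)
    have hr3 := hrec (n + 4)
    push_cast at hr1 hr2 hr3
    have hωm : 0 ≤ ω (n + 2) := hωnn n
    have hQ : 0 ≤ γ₁ * (x + 2 - α) * (x + 3 - α) * (x + 4 - α) +
        γ₂ * (x + 5) * ((x + 2 - α) * (x + 3 - α)) +
        γ₃ * ((x + 5) * (x + 4)) * (x + 2 - α) +
        γ₄ * ((x + 5) * (x + 4) * (x + 3)) := by
      have hq2 : (0:ℝ) ≤ 10 - 5 * α / 2 - α ^ 2 / 2 := by nlinarith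
      have hq1 : (0:ℝ) ≤ 31 - 217 * α / 12 - 9 * α ^ 2 / 8 + 13 * α ^ 3 / 12 + α ^ 4 / 8 := by
        nlinarith [sq_nonneg (α - 1.71), sq_nonneg α, mul_pos hα0 hα0]
      rw [hγ₁, hγ₂, hγ₃]
      linarith [pow_nonneg hx 3, mul_nonneg hq2 (sq_nonneg x), mul_nonneg hq1 hx, hB2]
    have hden : (0:ℝ) < (x + 3) * (x + 4) * (x + 5) := by positivity
    have hid : (γ₁ * ω (n + 2 + 3) + γ₂ * ω (n + 2 + 2) + γ₃ * ω (n + 2 + 1) + γ₄ * ω (n + 2)) *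
        ((x + 3) * (x + 4) * (x + 5)) =
        ω (n + 2) * (γ₁ * (x + 2 - α) * (x + 3 - α) * (x + 4 - α) +
        γ₂ * (x + 5) * ((x + 2 - α) * (x + 3 - α)) +
        γ₃ * ((x + 5) * (x + 4)) * (x + 2 - α) +
        γ₄ * ((x + 5) * (x + 4) * (x + 3))) := by
      have h5 : ω (n + 2 + 3) = ω (n + 2 + 2) * ((x + 4 - α) / (x + 5)) := by
        rw [show n + 2 + 3 = n + 4 + 1 from rfl, hr3, hxdef]; ring_nf
      have h4 : ω (n + 2 + 2) = ω (n + 2 + 1) * ((x + 3 - α) / (x + 4)) := by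
        rw [show n + 2 + 2 = n + 3 + 1 from rfl, hr2, hxdef]; ring_nf
      have h3 : ω (n + 2 + 1) = ω (n + 2) * ((x + 2 - α) / (x + 3)) := by
        rw [hr1, hxdef]; ring_nf
      rw [h5, h4, h3]
      have d3 : (x + 3) ≠ 0 := by positivity
      have d4 : (x + 4) ≠ 0 := by positivity
      have d5 : (x + 5) ≠ 0 := by positivity
      field_simp
    refine le_of_mul_le_mul_right ?_ hden
    rw [zero_mul, hid]
    exact mul_nonneg hωm hQ
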